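/- Let p_1, p_2, d_3, k > 0, a_1 > 1/2, and 0 < a_2 < a_1. Define h_1(y) = 2 p_1 (1 - a_1/(1 + k y)) and h_2(y) = p_2 (2 a_2/(1 + k y) - 1). For constants u_1*, u_3* with u_3* ≥ 0, say (u_1*, u_3*) is an equilibrium of the reduced Knauer system if (2 a_1/(1 + k u_3*) - 1) p_1 u_1* = 0 and 2 p_2 (1 - a_2/(1 + k u_3*)) · ∫_0^∞ h_1(u_3*) u_1* e^{h_2(u_3*) σ} dσ - d_3 u_3* = 0 (the integral being required to converge, which holds in all cases below). Then (u_1*, u_3*) is an equilibrium of the reduced Knauer system if and only if either (u_1*, u_3*) = (0, 0), or u_3* = (2 a_1 - 1)/k and u_1* = d_3 u_3* (1 - a_2/a_1) / ( p_1 (2 - a_2/a_1) ). -/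

import Mathlib

open MeasureTheory

lemma aux_exp_integral {b : ℝ} (hb : 0 < b) :
    ∫ x in Set.Ioi (0 : ℝ), Real.exp (-b * x) = 1 / b := by
  have hderiv : ∀ x ∈ Set.Ici (0:ℝ),
      HasDerivAt (fun x : ℝ => -Real.exp (-b * x) / b) (Real.exp (-b * x)) x := by
    intro x _
    have := (((hasDerivAt_id x).const_mul (-b)).exp).neg.div_const b
    simpa [mul_comm, hb.ne'] using this
  have htend : Filter.Tendsto (fun x : ℝ => -Real.exp (-b * x) / b)
      Filter.atTop (nhds (-0 / b)) := by
    refine Filter.Tendsto.div_const (Filter.Tendsto.neg ?_) _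
    exact Real.tendsto_exp_atBot.comp (Filter.tendsto_id.const_mul_atTop_of_neg (by linarith))
  have := integral_Ioi_of_hasDerivAt_of_tendsto' hderiv (exp_neg_integrableOn_Ioi 0 hb) htend
  simp only [neg_mul] at this ⊢
  rw [this]
  simp [hb.ne']
  ring

/-- Equilibria of the reduced Knauer et al. white blood cell system: the only
equilibria are the trivial one `(0,0)` and the positive equilibrium
`u₃* = (2a₁-1)/k`, `u₁* = d₃ u₃* (1 - a₂/a₁)/(p₁(2 - a₂/a₁))`. -/
theorem stmt17
    (p₁ p₂ d₃ k a₁ a₂ : ℝ)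
    (hp₁ : 0 < p₁) (hp₂ : 0 < p₂) (hd₃ : 0 < d₃) (hk : 0 < k)
    (ha₁ : 1 / 2 < a₁) (ha₂pos : 0 < a₂) (ha₂ : a₂ < a₁)
    (h₁ h₂ : ℝ → ℝ)
    (hh₁ : ∀ y, h₁ y = 2 * p₁ * (1 - a₁ / (1 + k * y)))
    (hh₂ : ∀ y, h₂ y = p₂ * (2 * a₂ / (1 + k * y) - 1))
    (u₁s u₃s : ℝ) (hu₃s : 0 ≤ u₃s) :
    ((2 * a₁ / (1 + k * u₃s) - 1) * p₁ * u₁s = 0 ∧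
      IntegrableOn (fun σ : ℝ => h₁ u₃s * u₁s * Real.exp (h₂ u₃s * σ))
        (Set.Ioi 0) ∧
      2 * p₂ * (1 - a₂ / (1 + k * u₃s))
          * (∫ σ in Set.Ioi (0 : ℝ), h₁ u₃s * u₁s * Real.exp (h₂ u₃s * σ))
        - d₃ * u₃s = 0)
    ↔ ((u₁s = 0 ∧ u₃s = 0) ∨
        (u₃s = (2 * a₁ - 1) / k ∧
          u₁s = d₃ * u₃s * (1 - a₂ / a₁) / (p₁ * (2 - a₂ / a₁)))) := by
  have ha₁pos : 0 < a₁ := by linarith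
  have hD : (0:ℝ) < 1 + k * u₃s := by nlinarith
  -- data for the positive equilibrium case
  have hfrac : a₂ / a₁ < 1 := (div_lt_one ha₁pos).2 ha₂
  have hb : 0 < p₂ * (1 - a₂ / a₁) := by nlinarith
  have hne1 : (1 : ℝ) - a₂ / a₁ ≠ 0 := by linarith
  have hne2 : (2 : ℝ) - a₂ / a₁ ≠ 0 := by linarith
  have hne3 : a₁ - a₂ ≠ 0 := by linarith
  have hne4 : 2 * a₁ - a₂ ≠ 0 := by linarith
  constructor
  · rintro ⟨e1, hint, e3⟩
    rcases mul_eq_zero.1 e1 with e1' | hu₁0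
    · -- 2a₁/(1+k u₃s) = 1, so u₃s = (2a₁-1)/k
      rcases mul_eq_zero.1 e1' with h | h
      · right
        have hDval : 1 + k * u₃s = 2 * a₁ := by
          field_simp at h
          linarith
        have hu₃val : u₃s = (2 * a₁ - 1) / k := by
          field_simp
          linarith
        refine ⟨hu₃val, ?_⟩
        have hh₂v : h₂ u₃s = -(p₂ * (1 - a₂ / a₁)) := by
          rw [hh₂ u₃s, hDval]
          field_simp
          ring
        have hh₁v : h₁ u₃s = p₁ := by
          rw [hh₁ u₃s, hDval]
          field_simp
          ring
        rw [hDval] at e3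
        rw [hh₁v, hh₂v] at e3
        rw [MeasureTheory.integral_const_mul _ _, aux_exp_integral hb] at e3
        field_simp at e3
        have hcan : (2 * a₁ * p₂) ≠ 0 := by positivity
        have key : u₁s * (p₁ * (2 * a₁ - a₂)) = d₃ * u₃s * (a₁ - a₂) := by
          apply mul_right_cancel₀ hcan
          linear_combination (2 * a₁ * p₂) * e3
        rw [eq_div_iff (mul_ne_zero hp₁.ne' hne2)]
        field_simp
        linear_combination key
      · exact absurd h hp₁.ne'
    · -- u₁s = 0
      left
      refine ⟨hu₁0, ?_⟩
      have : (∫ σ in Set.Ioi (0 : ℝ), h₁ u₃s * u₁s * Real.exp (h₂ u₃s * σ)) = 0 := by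
        simp [hu₁0]
      rw [this] at e3
      have := hd₃.ne'
      nlinarith [e3]
  · rintro (⟨hu₁0, hu₃0⟩ | ⟨hu₃v, hu₁v⟩)
    · subst hu₁0; subst hu₃0
      refine ⟨by ring, ?_, ?_⟩
      · simpa using integrableOn_zero (μ := volume) (s := Set.Ioi (0:ℝ)) (β := ℝ)
      · simp
    · have hDval : 1 + k * u₃s = 2 * a₁ := by
        rw [hu₃v]; field_simp; ring
      have hh₂v : h₂ u₃s = -(p₂ * (1 - a₂ / a₁)) := by
        rw [hh₂ u₃s, hDval]; field_simp; ring
      have hh₁v : h₁ u₃s = p₁ := by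
        rw [hh₁ u₃s, hDval]; field_simp; ring
      refine ⟨?_, ?_, ?_⟩
      · rw [hDval]
        field_simp
        ring
      · rw [hh₂v]
        exact (exp_neg_integrableOn_Ioi 0 hb).const_mul _
      · rw [hDval, hh₁v, hh₂v, MeasureTheory.integral_const_mul _ _, aux_exp_integral hb]
        rw [hu₁v]
        field_simp
        ring
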